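/- There exist a network instance satisfying the model assumptions (finite node set V, symmetric edge set E, tasks T, packet sizes, weights, and nondecreasing convex continuously differentiable link and computation costs) and an input-rate vector r ∈ D_r such that the optimal-solution map F_opt is not lower hemicontinuous at r: there exist a strategy φ ∈ F_opt(r) and a sequence rⁿ ∈ D_r with rⁿ → r such that no sequence φⁿ with φⁿ ∈ F_opt(rⁿ) for all n converges to φ. -/

import Mathlib

open Finset

/-- A feasible forwarding strategy `(φ⁻, φ⁺)`. -/
def StratFeasible {V M : Type*} [Fintype V] [DecidableEq V] [Fintype M] [DecidableEq M]
    (E : Finset (V × V)) (Tsk : Finset (V × M))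
    (φm : V → Option V → V × M → ℝ) (φp : V → V → V × M → ℝ) : Prop :=
  (∀ i j dm, 0 ≤ φm i j dm) ∧ (∀ i j dm, φm i j dm ≤ 1) ∧
  (∀ i j dm, 0 ≤ φp i j dm) ∧ (∀ i j dm, φp i j dm ≤ 1) ∧
  (∀ i j dm, (i, j) ∉ E → φm i (some j) dm = 0) ∧
  (∀ i j dm, (i, j) ∉ E → φp i j dm = 0) ∧
  (∀ dm ∈ Tsk, ∀ i : V, φm i none dm + ∑ j, φm i (some j) dm = 1) ∧
  (∀ dm ∈ Tsk, ∀ i : V, i ≠ dm.1 → ∑ j, φp i j dm = 1) ∧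
  (∀ dm ∈ Tsk, ∀ j, φp dm.1 j dm = 0)

/-- `(t⁻, t⁺)` is a nonnegative solution of the traffic equations for strategy `(φ⁻, φ⁺)` at
input rates `r`. -/
def TrafficSol {V M : Type*} [Fintype V] [DecidableEq V] [Fintype M] [DecidableEq M]
    (Tsk : Finset (V × M)) (r : V → V × M → ℝ)
    (φm : V → Option V → V × M → ℝ) (φp : V → V → V × M → ℝ)
    (tm tp : V → V × M → ℝ) : Prop :=
  (∀ i dm, 0 ≤ tm i dm) ∧ (∀ i dm, 0 ≤ tp i dm) ∧
  (∀ dm ∈ Tsk, ∀ i : V, tm i dm = r i dm + ∑ j, tm j dm * φm j (some i) dm) ∧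
  (∀ dm ∈ Tsk, ∀ i : V,
    tp i dm = tm i dm * φm i none dm + ∑ j, tp j dm * φp j i dm)

/-- `(t⁻, t⁺)` is the coordinatewise minimal nonnegative traffic solution. -/
def MinTraffic {V M : Type*} [Fintype V] [DecidableEq V] [Fintype M] [DecidableEq M]
    (Tsk : Finset (V × M)) (r : V → V × M → ℝ)
    (φm : V → Option V → V × M → ℝ) (φp : V → V → V × M → ℝ)
    (tm tp : V → V × M → ℝ) : Prop :=
  TrafficSol Tsk r φm φp tm tp ∧
    ∀ tm' tp', TrafficSol Tsk r φm φp tm' tp' →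
      ∀ i dm, tm i dm ≤ tm' i dm ∧ tp i dm ≤ tp' i dm

/-- The set `D_φ(r)` of feasible strategies admitting a traffic solution at input rates `r`. -/
def Dphi {V M : Type*} [Fintype V] [DecidableEq V] [Fintype M] [DecidableEq M]
    (E : Finset (V × V)) (Tsk : Finset (V × M)) (r : V → V × M → ℝ) :
    Set ((V → Option V → V × M → ℝ) × (V → V → V × M → ℝ)) :=
  {φ | StratFeasible E Tsk φ.1 φ.2 ∧ ∃ tm tp, TrafficSol Tsk r φ.1 φ.2 tm tp}

/-- The stability region `D_r` of input rates. -/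
def Dr {V M : Type*} [Fintype V] [DecidableEq V] [Fintype M] [DecidableEq M]
    (E : Finset (V × V)) (Tsk : Finset (V × M)) : Set (V → V × M → ℝ) :=
  {r | (∀ i dm, 0 ≤ r i dm) ∧ (Dphi E Tsk r).Nonempty}

/-- Total cost of a strategy with traffic `(t⁻, t⁺)`. -/
noncomputable def stratCost {V M : Type*} [Fintype V] [DecidableEq V] [Fintype M] [DecidableEq M]
    (E : Finset (V × V)) (Tsk : Finset (V × M))
    (Lm Lp : M → ℝ) (w : V → M → ℝ) (D : V → V → ℝ → ℝ) (C : V → ℝ → ℝ)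
    (φm : V → Option V → V × M → ℝ) (φp : V → V → V × M → ℝ)
    (tm tp : V → V × M → ℝ) : ℝ :=
  (∑ e ∈ E, D e.1 e.2 (∑ dm ∈ Tsk,
      (Lm dm.2 * (tm e.1 dm * φm e.1 (some e.2) dm) + Lp dm.2 * (tp e.1 dm * φp e.1 e.2 dm))))
    + ∑ i, C i (∑ dm ∈ Tsk, w i dm.2 * (tm i dm * φm i none dm))

/-- The optimal-solution set `F_opt(r)`: feasible strategies whose cost, evaluated at the
coordinatewise minimal traffic solution, is no larger than that of any other feasible strategy
evaluated at its minimal traffic solution. -/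
def Fopt {V M : Type*} [Fintype V] [DecidableEq V] [Fintype M] [DecidableEq M]
    (E : Finset (V × V)) (Tsk : Finset (V × M))
    (Lm Lp : M → ℝ) (w : V → M → ℝ) (D : V → V → ℝ → ℝ) (C : V → ℝ → ℝ)
    (r : V → V × M → ℝ) :
    Set ((V → Option V → V × M → ℝ) × (V → V → V × M → ℝ)) :=
  {φ | φ ∈ Dphi E Tsk r ∧
    ∃ tm tp, MinTraffic Tsk r φ.1 φ.2 tm tp ∧
      ∀ φ' ∈ Dphi E Tsk r, ∀ tm' tp', MinTraffic Tsk r φ'.1 φ'.2 tm' tp' →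
        stratCost E Tsk Lm Lp w D C φ.1 φ.2 tm tp
          ≤ stratCost E Tsk Lm Lp w D C φ'.1 φ'.2 tm' tp'}

/-! ### Auxiliary definitions for the counterexample instance -/

/-- The single task: destination node `0`, type `0`. -/
def dmEx : Fin 3 × Fin 1 := (0, 0)

/-- Complete graph on three nodes. -/
def Eex : Finset (Fin 3 × Fin 3) := Finset.univ.filter fun p => p.1 ≠ p.2

/-- Task set. -/
def Tex : Finset (Fin 3 × Fin 1) := {dmEx}

/-- Link costs: link `(1,0)` has identity cost, all other links are free. -/
noncomputable def Dex : Fin 3 → Fin 3 → ℝ → ℝ := fun i j x => if i = 1 ∧ j = 0 then x else 0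

/-- The "bad" optimum at `r = 0`: node `1` forwards data to node `0`, other nodes
compute locally; results are sent straight to node `0`. -/
noncomputable def φmEx : Fin 3 → Option (Fin 3) → Fin 3 × Fin 1 → ℝ := fun i j _ =>
  if i = 1 then (if j = some 0 then 1 else 0) else (if j = none then 1 else 0)

noncomputable def φpEx : Fin 3 → Fin 3 → Fin 3 × Fin 1 → ℝ := fun i j _ =>
  if i ≠ 0 ∧ j = 0 then 1 else 0

/-- Reference strategy: compute locally everywhere, results routed `1 → 2 → 0`. -/
noncomputable def φm0 : Fin 3 → Option (Fin 3) → Fin 3 × Fin 1 → ℝ := fun _ j _ =>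
  if j = none then 1 else 0

noncomputable def φp0 : Fin 3 → Fin 3 → Fin 3 × Fin 1 → ℝ := fun i j _ =>
  if (i = 1 ∧ j = 2) ∨ (i = 2 ∧ j = 0) then 1 else 0

/-- Minimal data traffic of the reference strategy. -/
noncomputable def tmf (r : Fin 3 → Fin 3 × Fin 1 → ℝ) : Fin 3 → Fin 3 × Fin 1 → ℝ :=
  fun i dm => if dm = dmEx then r i dm else 0

/-- Minimal result traffic of the reference strategy. -/
noncomputable def tpf (r : Fin 3 → Fin 3 × Fin 1 → ℝ) : Fin 3 → Fin 3 × Fin 1 → ℝ :=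
  fun i dm => if dm = dmEx then
    (if i = 0 then r 0 dm + r 1 dm + r 2 dm else if i = 1 then r 1 dm else r 1 dm + r 2 dm)
  else 0

lemma memEex (i j : Fin 3) : (i, j) ∈ Eex ↔ i ≠ j := by
  simp [Eex]

lemma feas0 : StratFeasible Eex Tex φm0 φp0 := by
  refine ⟨?_, ?_, ?_, ?_, ?_, ?_, ?_, ?_, ?_⟩
  · intro i j dm; unfold φm0; split_ifs <;> norm_num
  · intro i j dm; unfold φm0; split_ifs <;> norm_num
  · intro i j dm; unfold φp0; split_ifs <;> norm_num
  · intro i j dm; unfold φp0; split_ifs <;> norm_num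
  · intro i j dm _; simp [φm0]
  · intro i j dm h
    rw [memEex] at h
    push_neg at h
    subst h
    fin_cases i <;> simp [φp0]
  · intro dm _ i; fin_cases i <;> simp [φm0, Fin.sum_univ_three]
  · intro dm hdm i hi
    simp only [Tex, Finset.mem_singleton] at hdm
    subst hdm
    fin_cases i
    · exact absurd rfl hi
    · simp [φp0, Fin.sum_univ_three, dmEx]
    · simp [φp0, Fin.sum_univ_three, dmEx]
  · intro dm hdm j
    simp only [Tex, Finset.mem_singleton] at hdm
    subst hdm
    simp [φp0, dmEx]

lemma feasEx : StratFeasible Eex Tex φmEx φpEx := by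
  refine ⟨?_, ?_, ?_, ?_, ?_, ?_, ?_, ?_, ?_⟩
  · intro i j dm; unfold φmEx; split_ifs <;> norm_num
  · intro i j dm; unfold φmEx; split_ifs <;> norm_num
  · intro i j dm; unfold φpEx; split_ifs <;> norm_num
  · intro i j dm; unfold φpEx; split_ifs <;> norm_num
  · intro i j dm h
    rw [memEex] at h
    push_neg at h
    subst h
    fin_cases i <;> simp [φmEx]
  · intro i j dm h
    rw [memEex] at h
    push_neg at h
    subst h
    fin_cases i <;> simp [φpEx]
  · intro dm _ i; fin_cases i <;> simp [φmEx, Fin.sum_univ_three]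
  · intro dm hdm i hi
    simp only [Tex, Finset.mem_singleton] at hdm
    subst hdm
    fin_cases i
    · exact absurd rfl hi
    · simp [φpEx, Fin.sum_univ_three, dmEx]
    · simp [φpEx, Fin.sum_univ_three, dmEx]
  · intro dm hdm j
    simp only [Tex, Finset.mem_singleton] at hdm
    subst hdm
    simp [φpEx, dmEx]

lemma min0 (r : Fin 3 → Fin 3 × Fin 1 → ℝ) (hr : ∀ i dm, 0 ≤ r i dm) :
    MinTraffic Tex r φm0 φp0 (tmf r) (tpf r) := by
  constructor
  · refine ⟨?_, ?_, ?_, ?_⟩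
    · intro i dm; unfold tmf; split_ifs with h
      · exact hr i dm
      · exact le_refl 0
    · intro i dm; unfold tpf
      split_ifs <;>
        first
          | exact le_refl 0
          | exact hr _ _
          | exact add_nonneg (hr _ _) (hr _ _)
          | exact add_nonneg (add_nonneg (hr _ _) (hr _ _)) (hr _ _)
    · intro dm hdm i
      simp only [Tex, Finset.mem_singleton] at hdm
      subst hdm
      simp [tmf, φm0, Fin.sum_univ_three]
    · intro dm hdm i
      simp only [Tex, Finset.mem_singleton] at hdm
      subst hdm
      fin_cases i <;> simp [tmf, tpf, φm0, φp0, Fin.sum_univ_three, dmEx] <;> ring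
  · rintro tm' tp' ⟨hm', hp', heqm, heqp⟩ i dm
    by_cases hdm : dm = dmEx
    · subst hdm
      have hdmem : dmEx ∈ Tex := Finset.mem_singleton_self _
      have htm : ∀ i : Fin 3, tm' i dmEx = r i dmEx := by
        intro i
        have := heqm dmEx hdmem i
        simpa [φm0, Fin.sum_univ_three] using this
      have htp1 : tp' 1 dmEx = r 1 dmEx := by
        have := heqp dmEx hdmem 1
        simpa [φm0, φp0, Fin.sum_univ_three, htm] using this
      have htp2 : tp' 2 dmEx = r 1 dmEx + r 2 dmEx := by
        have h2 := heqp dmEx hdmem 2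
        simp [φm0, φp0, Fin.sum_univ_three, htm, htp1] at h2
        linarith
      have htp0 : tp' 0 dmEx = r 0 dmEx + r 1 dmEx + r 2 dmEx := by
        have h0 := heqp dmEx hdmem 0
        simp [φm0, φp0, Fin.sum_univ_three, htm, htp2] at h0
        linarith
      constructor
      · simp [tmf, htm]
      · fin_cases i <;> simp [tpf, htp0, htp1, htp2]
    · constructor
      · simp only [tmf, if_neg hdm]; exact hm' i dm
      · simp only [tpf, if_neg hdm]; exact hp' i dm

lemma costEq (ψm : Fin 3 → Option (Fin 3) → Fin 3 × Fin 1 → ℝ)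
    (ψp : Fin 3 → Fin 3 → Fin 3 × Fin 1 → ℝ) (tm tp : Fin 3 → Fin 3 × Fin 1 → ℝ) :
    stratCost Eex Tex (fun _ => 1) (fun _ => 1) (fun _ _ => 1) Dex (fun _ _ => 0)
      ψm ψp tm tp
      = tm 1 dmEx * ψm 1 (some 0) dmEx + tp 1 dmEx * ψp 1 0 dmEx := by
  unfold stratCost
  have h2 : ∑ i : Fin 3, (fun (_ : Fin 3) (_ : ℝ) => (0:ℝ)) i
      (∑ dm ∈ Tex, (fun (_ : Fin 3) (_ : Fin 1) => (1:ℝ)) i dm.2 * (tm i dm * ψm i none dm))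
      = 0 := by simp
  rw [h2, add_zero]
  rw [Finset.sum_eq_single_of_mem ((1 : Fin 3), (0 : Fin 3))]
  · simp [Dex, Tex, dmEx]
  · rw [memEex]; decide
  · intro b _ hb
    have : ¬(b.1 = 1 ∧ b.2 = 0) := by
      rintro ⟨h1, h0⟩
      exact hb (Prod.ext h1 h0)
    simp [Dex, this]

/-- Proposition 2: there is a network instance satisfying the model assumptions and an input
rate `r` in the stability region at which the optimal-solution map `F_opt` is not lower
hemicontinuous: some optimum `φ` at `r` is not the limit of any sequence of optima along some
sequence `rⁿ → r` in `D_r`. -/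
theorem stmt_9 :
    ∃ (n nm : ℕ) (E : Finset (Fin n × Fin n)) (Tsk : Finset (Fin n × Fin nm))
      (Lm Lp : Fin nm → ℝ) (w : Fin n → Fin nm → ℝ)
      (D : Fin n → Fin n → ℝ → ℝ) (C : Fin n → ℝ → ℝ),
      (∀ i j : Fin n, (i, j) ∈ E → (j, i) ∈ E) ∧ (∀ i : Fin n, (i, i) ∉ E) ∧
      (∀ m, 0 < Lm m) ∧ (∀ m, 0 < Lp m) ∧ (∀ i m, 0 < w i m) ∧
      (∀ i j, Monotone (D i j)) ∧ (∀ i j, ConvexOn ℝ Set.univ (D i j)) ∧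
      (∀ i j, ContDiff ℝ 1 (D i j)) ∧
      (∀ i, Monotone (C i)) ∧ (∀ i, ConvexOn ℝ Set.univ (C i)) ∧
      (∀ i, ContDiff ℝ 1 (C i)) ∧
      ∃ r ∈ Dr E Tsk, ∃ φ ∈ Fopt E Tsk Lm Lp w D C r,
        ∃ rseq : ℕ → (Fin n → Fin n × Fin nm → ℝ),
          (∀ k, rseq k ∈ Dr E Tsk) ∧
          Filter.Tendsto rseq Filter.atTop (nhds r) ∧
          ¬ ∃ φseq : ℕ → (Fin n → Option (Fin n) → Fin n × Fin nm → ℝ) ×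
                (Fin n → Fin n → Fin n × Fin nm → ℝ),
              (∀ k, φseq k ∈ Fopt E Tsk Lm Lp w D C (rseq k)) ∧
              Filter.Tendsto φseq Filter.atTop (nhds φ) := by
  refine ⟨3, 1, Eex, Tex, (fun _ => 1), (fun _ => 1), (fun _ _ => 1), Dex, (fun _ _ => 0),
    ?_, ?_, fun _ => one_pos, fun _ => one_pos, fun _ _ => one_pos, ?_, ?_, ?_,
    fun _ => monotone_const, fun _ => convexOn_const 0 convex_univ, fun _ => contDiff_const,
    ?_⟩
  · -- symmetry of E
    intro i j h
    rw [memEex] at h ⊢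
    exact h.symm
  · -- no self-loops
    intro i h
    rw [memEex] at h
    exact h rfl
  · -- D monotone
    intro i j a b hab
    unfold Dex
    split_ifs <;> simp [hab]
  · -- D convex
    intro i j
    unfold Dex
    by_cases h : i = 1 ∧ j = 0
    · simp only [if_pos h]
      exact convexOn_id convex_univ
    · simp only [if_neg h]
      exact convexOn_const 0 convex_univ
  · -- D ContDiff
    intro i j
    unfold Dex
    by_cases h : i = 1 ∧ j = 0
    · simp only [if_pos h]
      exact contDiff_id
    · simp only [if_neg h]
      exact contDiff_const
  -- the input rate r = 0
  refine ⟨(fun _ _ => 0), ?_, ?_⟩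
  · -- 0 ∈ Dr
    exact ⟨fun _ _ => le_refl 0,
      ⟨(φm0, φp0), feas0, tmf (fun _ _ => 0), tpf (fun _ _ => 0),
        (min0 _ (fun _ _ => le_refl 0)).1⟩⟩
  -- the strategy φ
  refine ⟨(φmEx, φpEx), ?_, ?_⟩
  · -- φ ∈ Fopt at r = 0
    have hsol : TrafficSol Tex (fun _ _ => 0) φmEx φpEx (fun _ _ => 0) (fun _ _ => 0) :=
      ⟨fun _ _ => le_refl 0, fun _ _ => le_refl 0, by simp, by simp⟩
    refine ⟨⟨feasEx, _, _, hsol⟩, (fun _ _ => 0), (fun _ _ => 0),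
      ⟨hsol, ?_⟩, ?_⟩
    · rintro tm' tp' ⟨hm', hp', -, -⟩ i dm
      exact ⟨hm' i dm, hp' i dm⟩
    · rintro φ' ⟨hfe', -⟩ tm' tp' hmin'
      rw [costEq, costEq]
      simp only [mul_zero, zero_mul, add_zero]
      have h1 := mul_nonneg (hmin'.1.1 1 dmEx) (hfe'.1 1 (some 0) dmEx)
      have h2 := mul_nonneg (hmin'.1.2.1 1 dmEx) (hfe'.2.2.1 1 0 dmEx)
      linarith
  -- the sequence of input rates
  refine ⟨(fun k i _ => if i = 1 then 1 / (k + 1 : ℝ) else 0), ?_, ?_, ?_⟩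
  · -- rseq k ∈ Dr
    intro k
    have hrk : ∀ (i : Fin 3) (dm : Fin 3 × Fin 1),
        (0:ℝ) ≤ (fun (i : Fin 3) (_ : Fin 3 × Fin 1) => if i = 1 then 1 / (k + 1 : ℝ) else 0) i dm := by
      intro i dm
      dsimp only
      split_ifs
      · positivity
      · exact le_refl 0
    exact ⟨hrk, ⟨(φm0, φp0), feas0, _, _, (min0 _ hrk).1⟩⟩
  · -- rseq → 0
    rw [tendsto_pi_nhds]
    intro i
    rw [tendsto_pi_nhds]
    intro dm
    by_cases h : i = 1
    · simp only [h, if_pos]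
      simpa using tendsto_one_div_add_atTop_nhds_zero_nat (𝕜 := ℝ)
    · simp only [if_neg h]
      exact tendsto_const_nhds
  · -- no sequence of optima converges to φ
    rintro ⟨φs, hmem, htend⟩
    -- every optimum at rseq k puts no data on link (1,0)
    have hzero : ∀ k : ℕ, (φs k).1 1 (some 0) dmEx = 0 := by
      intro k
      obtain ⟨⟨hfe, -⟩, tm, tp, ⟨hsol, -⟩, hopt⟩ := hmem k
      have hrk : ∀ (i : Fin 3) (dm : Fin 3 × Fin 1),
          (0:ℝ) ≤ (fun (i : Fin 3) (_ : Fin 3 × Fin 1) => if i = 1 then 1 / (k + 1 : ℝ) else 0) i dm := by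
        intro i dm
        dsimp only
        split_ifs
        · positivity
        · exact le_refl 0
      have h0min := min0 _ hrk
      have hle := hopt (φm0, φp0) ⟨feas0, _, _, h0min.1⟩ _ _ h0min
      rw [costEq, costEq] at hle
      have hc0 : φm0 1 (some 0) dmEx = 0 := by simp [φm0]
      have hc1 : φp0 1 0 dmEx = 0 := by simp [φp0]
      simp only [hc0, hc1, mul_zero, add_zero] at hle
      -- tm 1 dmEx is at least 1/(k+1) > 0
      have heq := hsol.2.2.1 dmEx (Finset.mem_singleton_self _) 1
      have hsum : 0 ≤ ∑ j : Fin 3, tm j dmEx * (φs k).1 j (some 1) dmEx :=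
        Finset.sum_nonneg fun j _ => mul_nonneg (hsol.1 j dmEx) (hfe.1 j (some 1) dmEx)
      have hpos : (0:ℝ) < tm 1 dmEx := by
        rw [heq]
        have h15 : (0:ℝ) < ((k:ℝ) + 1)⁻¹ := by positivity
        norm_num
        linarith
      have ha : 0 ≤ tm 1 dmEx * (φs k).1 1 (some 0) dmEx :=
        mul_nonneg (hsol.1 1 dmEx) (hfe.1 1 (some 0) dmEx)
      have hb : 0 ≤ tp 1 dmEx * (φs k).2 1 0 dmEx :=
        mul_nonneg (hsol.2.1 1 dmEx) (hfe.2.2.1 1 0 dmEx)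
      have hfz : 0 ≤ (φs k).1 1 (some 0) dmEx := hfe.1 1 (some 0) dmEx
      nlinarith
    -- but φ has value 1 there, contradicting convergence
    have hcont : Continuous fun p : (Fin 3 → Option (Fin 3) → Fin 3 × Fin 1 → ℝ) ×
        (Fin 3 → Fin 3 → Fin 3 × Fin 1 → ℝ) => p.1 1 (some 0) dmEx := by
      fun_prop
    have h1 := (hcont.tendsto _).comp htend
    have h2 : Filter.Tendsto (fun k => (φs k).1 1 (some 0) dmEx) Filter.atTop
        (nhds (φmEx 1 (some 0) dmEx)) := h1
    have h3 : Filter.Tendsto (fun k => (φs k).1 1 (some 0) dmEx) Filter.atTop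
        (nhds 0) := by
      simp only [hzero]
      exact tendsto_const_nhds
    have h4 : φmEx 1 (some 0) dmEx = 0 := tendsto_nhds_unique h2 h3
    simp [φmEx] at h4
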